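/- On a three-dimensional f-cosymplectic manifold admitting a Ricci soliton (more generally, where the contracted Bianchi identity Σᵢ[(∇_Z Ric)(eᵢ,eᵢ) − 2(∇_{eᵢ} Ric)(eᵢ,Z)] = 0 holds), the scalar curvature satisfies 2ξ(f̃) + ξ(R)/2 + 2(3f̃ + R/2) f = 0. -/
import Mathlib


open scoped BigOperators

/-- On a three-dimensional f-cosymplectic manifold admitting a Ricci
soliton (more generally, where the contracted Bianchi identity
`Σᵢ[(∇_Z Ric)(eᵢ,eᵢ) − 2(∇_{eᵢ} Ric)(eᵢ,Z)] = 0` holds), the scalar curvature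
satisfies `2ξ(f̃) + ξ(R)/2 + 2(3f̃ + R/2) f = 0`.  Here `ft = f̃ = ξ(f) + f²`,
the Ricci tensor has the form given by Lemma 2.5, its covariant derivative is given
by (3.6), and `{e₀, e₁, e₂ = ξ}` is a local orthonormal frame. -/
theorem three_dim_f_cosymplectic_scalar_relation
    {C : Type*} [CommRing C] [Invertible (2 : C)]
    {V : Type*} [AddCommGroup V] [Module C V]
    (g : V → V → C) (φ : V → V) (ξ : V) (η : V → C) (f ft scal : C)
    (act : V → C → C) (Ric : V → V → C) (nablaRic : V → V → V → C)
    (e : Fin 3 → V)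
    (horth : ∀ i j, g (e i) (e j) = if i = j then 1 else 0)
    (he2 : e 2 = ξ)
    (hηe : ∀ i, η (e i) = if i = 2 then 1 else 0)
    (hηξ : η ξ = 1)
    (hft : ft = act ξ f + f * f)
    (hcompat : ∀ X Y, g (φ X) (φ Y) = g X Y - η X * η Y)
    -- Lemma 2.5: the Ricci tensor of a 3-dimensional f-cosymplectic manifold
    (hRicForm : ∀ Y Z, Ric Y Z
        = (-(3:C) * ft - ⅟(2:C) * scal) * η Y * η Z
          + (ft + ⅟(2:C) * scal) * g Y Z)
    -- (3.6): the covariant derivative of the Ricci tensor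
    (hNablaRic : ∀ X Y Z, nablaRic X Y Z
        = (-(3:C) * act X ft - ⅟(2:C) * act X scal) * η Y * η Z
          + (-(3:C) * ft - ⅟(2:C) * scal) * f * g (φ X) (φ Y) * η Z
          + (-(3:C) * ft - ⅟(2:C) * scal) * f * η Y * g (φ X) (φ Z)
          + (act X ft + ⅟(2:C) * act X scal) * g Y Z)
    -- the contracted second Bianchi identity (3.7)
    (hContr : ∀ Z,
        ∑ i, (nablaRic Z (e i) (e i) - 2 * nablaRic (e i) (e i) Z) = 0) :
    2 * act ξ ft + ⅟(2:C) * act ξ scal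
      + 2 * (3 * ft + ⅟(2:C) * scal) * f = 0 := by
  have h := hContr ξ
  rw [← he2] at h ⊢
  simp only [Fin.sum_univ_three, hNablaRic, hcompat, horth, hηe] at h
  norm_num [show (0:Fin 3) ≠ 2 by decide, show (1:Fin 3) ≠ 2 by decide] at h
  have key : (2:C) * (2 * act (e 2) ft + ⅟(2:C) * act (e 2) scal
      + 2 * (3 * ft + ⅟(2:C) * scal) * f) = 0 := by linear_combination h
  calc 2 * act (e 2) ft + ⅟(2:C) * act (e 2) scal + 2 * (3 * ft + ⅟(2:C) * scal) * f
      = ⅟(2:C) * ((2:C) * (2 * act (e 2) ft + ⅟(2:C) * act (e 2) scal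
          + 2 * (3 * ft + ⅟(2:C) * scal) * f)) := (invOf_mul_cancel_left _ _).symm
    _ = ⅟(2:C) * 0 := by rw [key]
    _ = 0 := mul_zero _
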